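/- Let G be a connected undirected acyclic graph (a tree) that is not arbitrarily regularizable. Then the system Bw = re has only the trivial solution w = 0, r = 0, where B is the incidence matrix of G. -/

import Mathlib

open Matrix BigOperators

open Classical in
/-- An undirected graph is arbitrarily regularizable if there is a real weighting of its
edges, not identically zero, and `r > 0`, such that `B w = r e` where `B` is the
incidence matrix. -/
def ArbReg {V : Type*} [Fintype V] [DecidableEq V] (G : SimpleGraph V) : Prop :=
  ∃ (w : Sym2 V → ℝ) (r : ℝ), 0 < r ∧ w ≠ 0 ∧ (∀ e ∉ G.edgeSet, w e = 0) ∧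
    G.incMatrix ℝ *ᵥ w = fun _ => r

open Classical in
/-- At a vertex `u` where `(B w)_u = 0`, any incident edge of nonzero weight has a
companion: another incident edge of nonzero weight. -/
lemma exists_other_edge {V : Type*} [Fintype V] [DecidableEq V] (G : SimpleGraph V)
    (w : Sym2 V → ℝ) (h0 : G.incMatrix ℝ *ᵥ w = 0)
    {u y : V} (hadj : G.Adj y u) (hw : w s(y, u) ≠ 0) :
    ∃ x, G.Adj u x ∧ w s(u, x) ≠ 0 ∧ x ≠ y := by
  classical
  have hsum : ∑ e : Sym2 V, G.incMatrix ℝ u e * w e = 0 := by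
    have := congrFun h0 u
    simpa [Matrix.mulVec, dotProduct] using this
  have hsum2 : ∑ e ∈ Finset.univ.filter (fun e => e ∈ G.incidenceSet u), w e = 0 := by
    rw [← hsum, Finset.sum_filter]
    refine Finset.sum_congr rfl fun e _ => ?_
    by_cases he : e ∈ G.incidenceSet u
    · simp [he, G.incMatrix_of_mem_incidenceSet he]
    · simp [he, G.incMatrix_of_notMem_incidenceSet he]
  have hyu : s(y, u) ∈ G.incidenceSet u := G.mk'_mem_incidenceSet_right_iff.2 hadj
  by_contra hcon
  push_neg at hcon
  have hsingle : ∑ e ∈ Finset.univ.filter (fun e => e ∈ G.incidenceSet u), w e = w s(y, u) := by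
    refine Finset.sum_eq_single_of_mem _ (by simp [hyu]) ?_
    intro e he hne
    simp only [Finset.mem_filter, Finset.mem_univ, true_and] at he
    obtain ⟨hes, hue⟩ := he
    set x := Sym2.Mem.other hue with hx
    have hspec : s(u, x) = e := Sym2.other_spec hue
    have hadjux : G.Adj u x := by
      rw [← SimpleGraph.mem_edgeSet, hspec]; exact hes
    by_contra hwe
    have hxy : x = y := hcon x hadjux (by rwa [hspec])
    apply hne
    rw [← hspec, hxy, Sym2.eq_swap]
  rw [hsingle] at hsum2
  exact hw hsum2

open Classical in
/-- In an acyclic graph with `B w = 0`, from any edge of nonzero weight one can build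
arbitrarily long paths all of whose edges have nonzero weight. -/
lemma exists_long_path {V : Type*} [Fintype V] [DecidableEq V] (G : SimpleGraph V)
    (hac : G.IsAcyclic) (w : Sym2 V → ℝ) (h0 : G.incMatrix ℝ *ᵥ w = 0)
    {a b : V} (hab : G.Adj a b) (hwab : w s(a, b) ≠ 0) :
    ∀ n : ℕ, ∃ (x y z : V) (p : G.Walk x y) (h : G.Adj y z), p.IsPath ∧ z ∉ p.support ∧
      (∀ e ∈ p.edges, w e ≠ 0) ∧ w s(y, z) ≠ 0 ∧ p.length = n := by
  intro n
  induction n with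
  | zero =>
    refine ⟨a, a, b, SimpleGraph.Walk.nil, hab, SimpleGraph.Walk.IsPath.nil, ?_, by simp, hwab, rfl⟩
    simp [hab.ne']
  | succ n ih =>
    obtain ⟨x, y, z, p, h, hp, hzp, hedges, hwyz, hlen⟩ := ih
    -- extend the path by the edge y-z
    set p' : G.Walk x z := p.concat h with hp'def
    have hp' : p'.IsPath := by
      have hrev : p'.reverse = SimpleGraph.Walk.cons h.symm p.reverse := p.reverse_concat h
      have : p'.reverse.IsPath := by
        rw [hrev, SimpleGraph.Walk.cons_isPath_iff]
        exact ⟨hp.reverse, by simpa [SimpleGraph.Walk.support_reverse] using hzp⟩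
      simpa using this.reverse
    have hedges' : ∀ e ∈ p'.edges, w e ≠ 0 := by
      intro e he
      rw [hp'def, SimpleGraph.Walk.edges_concat] at he
      simp only [List.concat_eq_append, List.mem_append, List.mem_singleton] at he
      rcases he with he | he
      · exact hedges e he
      · rwa [he]
    -- find the next edge at z
    obtain ⟨x', hzx', hwzx', hx'y⟩ := exists_other_edge G w h0 h hwyz
    have hx'p' : x' ∉ p'.support := by
      intro hmem
      -- the suffix of p' from x' to z must equal the single edge by acyclicity
      have hq : (p'.dropUntil x' hmem).IsPath := hp'.dropUntil hmem
      have hsing := hac.path_unique ⟨p'.dropUntil x' hmem, hq⟩ (SimpleGraph.Path.singleton hzx'.symm)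
      have hqe : (p'.dropUntil x' hmem).edges = [s(x', z)] := by
        rw [show p'.dropUntil x' hmem = (SimpleGraph.Path.singleton hzx'.symm : G.Walk x' z) from
          congrArg Subtype.val hsing]
        simp [SimpleGraph.Path.singleton]
      have hmeme : s(x', z) ∈ p'.edges :=
        SimpleGraph.Walk.edges_dropUntil_subset p' hmem (by simp [hqe])
      rw [hp'def, SimpleGraph.Walk.edges_concat] at hmeme
      simp only [List.concat_eq_append, List.mem_append, List.mem_singleton] at hmeme
      rcases hmeme with hin | hin
      · exact hzp (SimpleGraph.Walk.snd_mem_support_of_mem_edges p hin)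
      · have : s(x', z) = s(y, z) := hin
        replace this := (Sym2.mk_eq_mk_iff (p := (x', z)) (q := (y, z))).1 this
        rcases this with h1 | h1
        · exact hx'y (by simpa using congrArg Prod.fst h1)
        · have hxz : x' = z := by simpa using congrArg Prod.fst h1
          exact hzx'.ne hxz.symm
    refine ⟨x, z, x', p', hzx', hp', hx'p', hedges', hwzx', ?_⟩
    rw [hp'def, SimpleGraph.Walk.length_concat, hlen]

open Classical in
/-- For an acyclic graph, the unsigned incidence matrix has trivial kernel on edge weightings. -/
lemma acyclic_ker {V : Type*} [Fintype V] [DecidableEq V] (G : SimpleGraph V)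
    (hac : G.IsAcyclic) (w : Sym2 V → ℝ) (hsupp : ∀ e ∉ G.edgeSet, w e = 0)
    (h0 : G.incMatrix ℝ *ᵥ w = 0) : w = 0 := by
  classical
  by_contra hw
  obtain ⟨e0, he0⟩ : ∃ e, w e ≠ 0 := by
    by_contra hall; push_neg at hall
    exact hw (funext fun e => hall e)
  have he0s : e0 ∈ G.edgeSet := by
    by_contra hns; exact he0 (hsupp e0 hns)
  induction e0 with
  | _ a b =>
    rw [SimpleGraph.mem_edgeSet] at he0s
    obtain ⟨x, y, z, p, h, hp, hzp, hedges, hwyz, hlen⟩ :=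
      exists_long_path G hac w h0 he0s he0 (Fintype.card V)
    have := hp.length_lt
    omega

open Classical in
/-- For a tree (connected acyclic graph) that is not arbitrarily regularizable, the system
`B w = r e` has only the trivial solution `w = 0`, `r = 0`. -/
theorem tree_not_arb_reg_only_trivial_solution
    {V : Type*} [Fintype V] [DecidableEq V] (G : SimpleGraph V)
    (hc : G.Connected) (hac : G.IsAcyclic) (hnr : ¬ ArbReg G) :
    ∀ (w : Sym2 V → ℝ) (r : ℝ), (∀ e ∉ G.edgeSet, w e = 0) →
      G.incMatrix ℝ *ᵥ w = (fun _ => r) → w = 0 ∧ r = 0 := by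
  intro w r hsupp heq
  obtain ⟨v0⟩ := hc.nonempty
  have hwzero_r : w = 0 → r = 0 := by
    intro hw0
    have := congrFun heq v0
    rw [hw0] at this
    simpa [Matrix.mulVec_zero] using this.symm
  rcases lt_trichotomy r 0 with hr | hr | hr
  · -- r < 0 : then -w witnesses ArbReg
    exfalso
    have hwne : w ≠ 0 := fun hw0 => absurd (hwzero_r hw0) (by rw [hwzero_r hw0] at hr; exact absurd hr (lt_irrefl 0))
    apply hnr
    refine ⟨-w, -r, by linarith, ?_, ?_, ?_⟩
    · simpa [neg_eq_zero] using hwne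
    · intro e he; simp [hsupp e he]
    · rw [Matrix.mulVec_neg, heq]
      funext v; simp
  · -- r = 0 : kernel case
    subst hr
    have h0 : G.incMatrix ℝ *ᵥ w = 0 := by
      rw [heq]; funext v; rfl
    exact ⟨acyclic_ker G hac w hsupp h0, rfl⟩
  · -- r > 0 : w ≠ 0 would give ArbReg; w = 0 gives r = 0, contradiction
    exfalso
    by_cases hw0 : w = 0
    · have := hwzero_r hw0; linarith
    · exact hnr ⟨w, r, hr, hw0, hsupp, heq⟩
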